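/- Let m ≥ 1 be an integer and let α > 0 be a real number with α > (m − 2)/2. Define u : ℝ^m → ℝ² by u(x) = (cos(‖x‖^{−α}), sin(‖x‖^{−α})), where ℝ² = EuclideanSpace ℝ (Fin 2) carries the Euclidean norm. Then the function x ↦ ‖iteratedFDeriv ℝ 2 u x‖ is not Lebesgue-integrable on the open unit ball B(0,1) ⊆ ℝ^m. -/

import Mathlib

open MeasureTheory

/-- The circle-valued lift `u(x) = (cos (v x), sin (v x)) ∈ ℝ²` of `v : E → ℝ`,
where `ℝ² = EuclideanSpace ℝ (Fin 2)`. -/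
noncomputable def circleLift {E : Type*} (v : E → ℝ) (x : E) : EuclideanSpace ℝ (Fin 2) :=
  (WithLp.equiv 2 (Fin 2 → ℝ)).symm ![Real.cos (v x), Real.sin (v x)]

open Metric Filter Set Topology

lemma aux_not_integrable (m : ℕ) (hm : 1 ≤ m) (s : ℝ) (hs : (m : ℝ) < s) {c : ℝ} (hc : 0 < c)
    (f : EuclideanSpace ℝ (Fin m) → ℝ) (hf0 : ∀ x, 0 ≤ f x)
    (hf : ∀ x : EuclideanSpace ℝ (Fin m), x ≠ 0 → c * ‖x‖ ^ (-s) ≤ f x) :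
    ¬ IntegrableOn f (Metric.ball 0 1) volume := by
  intro hint
  haveI : Nontrivial (EuclideanSpace ℝ (Fin m)) := by
    refine ⟨⟨EuclideanSpace.single (⟨0, hm⟩ : Fin m) (1 : ℝ), 0, fun h => ?_⟩⟩
    have := congrArg (fun z : EuclideanSpace ℝ (Fin m) => z (⟨0, hm⟩ : Fin m)) h
    simp [EuclideanSpace.single_apply] at this
  set μ := (volume : Measure (EuclideanSpace ℝ (Fin m)))
  have hVpos : 0 < (μ (ball (0 : EuclideanSpace ℝ (Fin m)) 1)).toReal :=
    ENNReal.toReal_pos (measure_ball_pos _ _ one_pos).ne' measure_ball_lt_top.ne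
  set V := (μ (ball (0 : EuclideanSpace ℝ (Fin m)) 1)).toReal with hV
  set I := ∫ x in ball (0 : EuclideanSpace ℝ (Fin m)) 1, f x ∂μ with hI
  have key : ∀ r : ℝ, r ∈ Set.Ioc (0 : ℝ) 1 → c * V * r ^ ((m : ℝ) - s) ≤ I := by
    intro r hr
    have hsub : ball (0 : EuclideanSpace ℝ (Fin m)) r \ {0} ⊆ ball 0 1 :=
      (diff_subset).trans (ball_subset_ball hr.2)
    have hint' : IntegrableOn f (ball (0 : EuclideanSpace ℝ (Fin m)) r \ {0}) μ :=
      hint.mono_set hsub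
    have hlow : ∀ x ∈ ball (0 : EuclideanSpace ℝ (Fin m)) r \ {0}, c * r ^ (-s) ≤ f x := by
      intro x hx
      have hx0 : x ≠ 0 := by simpa using hx.2
      have hxn : 0 < ‖x‖ := norm_pos_iff.2 hx0
      have h1 : ‖x‖ ≤ r := (mem_ball_zero_iff.1 hx.1).le
      have h2 : r ^ (-s) ≤ ‖x‖ ^ (-s) :=
        Real.rpow_le_rpow_of_nonpos hxn h1 (by linarith : -s ≤ 0)
      calc c * r ^ (-s) ≤ c * ‖x‖ ^ (-s) := by nlinarith
        _ ≤ f x := hf x hx0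
    have hmeas : MeasurableSet (ball (0 : EuclideanSpace ℝ (Fin m)) r \ {0}) :=
      measurableSet_ball.diff (measurableSet_singleton 0)
    have hμr : μ (ball (0 : EuclideanSpace ℝ (Fin m)) r \ {0}) =
        ENNReal.ofReal (r ^ m) * μ (ball 0 1) := by
      rw [measure_diff_null (measure_singleton _), Measure.addHaar_ball _ _ hr.1.le,
        finrank_euclideanSpace_fin]
    have hμfin : μ (ball (0 : EuclideanSpace ℝ (Fin m)) r \ {0}) ≠ ⊤ := by
      rw [hμr]
      exact ENNReal.mul_ne_top ENNReal.ofReal_ne_top measure_ball_lt_top.ne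
    have hlb := setIntegral_ge_of_const_le hmeas hμfin hlow hint'
    have hub : ∫ x in ball (0 : EuclideanSpace ℝ (Fin m)) r \ {0}, f x ∂μ ≤ I :=
      setIntegral_mono_set hint (Filter.Eventually.of_forall hf0)
        (HasSubset.Subset.eventuallyLE hsub)
    have htor : (μ (ball (0 : EuclideanSpace ℝ (Fin m)) r \ {0})).toReal = r ^ m * V := by
      rw [hμr, ENNReal.toReal_mul, ENNReal.toReal_ofReal (pow_nonneg hr.1.le m)]
    rw [measureReal_def, htor, smul_eq_mul, mul_comm (r ^ m * V)] at hlb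
    have hrw : c * r ^ (-s) * (r ^ m * V) = c * V * r ^ ((m : ℝ) - s) := by
      rw [← Real.rpow_natCast r m, ← mul_assoc, mul_assoc c _ _, ← Real.rpow_add hr.1]
      ring_nf
    linarith [hrw ▸ hlb]
  have htend : Tendsto (fun r : ℝ => c * V * r ^ ((m : ℝ) - s)) (𝓝[>] 0) atTop := by
    have h1 : Tendsto (fun r : ℝ => r ^ ((m : ℝ) - s)) (𝓝[>] 0) atTop := by
      have h2 : Tendsto (fun r : ℝ => (r⁻¹) ^ (s - (m : ℝ))) (𝓝[>] (0:ℝ)) atTop :=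
        (tendsto_rpow_atTop (by linarith)).comp tendsto_inv_nhdsGT_zero
      refine h2.congr' ?_
      filter_upwards [self_mem_nhdsWithin] with r hr
      have hr0 : (0:ℝ) < r := hr
      rw [Real.inv_rpow hr0.le, ← Real.rpow_neg hr0.le, neg_sub]
    exact h1.const_mul_atTop (by positivity)
  have h1 := htend.eventually_gt_atTop I
  have h2 : Set.Ioc (0 : ℝ) 1 ∈ 𝓝[>] (0 : ℝ) := Filter.mem_of_superset (inter_mem self_mem_nhdsWithin
    (mem_nhdsWithin_of_mem_nhds (Iic_mem_nhds one_pos))) (fun x hx => ⟨hx.1, hx.2⟩)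
  obtain ⟨r, hbig, hIoc⟩ := (h1.and (eventually_of_mem h2 fun x hx => hx)).exists
  exact absurd (key r hIoc) (not_le.2 hbig)

set_option maxHeartbeats 2000000 in
lemma aux_lower (m : ℕ) (α : ℝ) (hα : 0 < α) (x : EuclideanSpace ℝ (Fin m)) (hx : x ≠ 0) :
    α ^ 2 * ‖x‖ ^ (-(2 * α + 2)) ≤ Real.sqrt 2 *
      ‖iteratedFDeriv ℝ 2 (circleLift fun y : EuclideanSpace ℝ (Fin m) => ‖y‖ ^ (-α)) x‖ := by
  set v : EuclideanSpace ℝ (Fin m) → ℝ := fun y => ‖y‖ ^ (-α) with hvdef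
  set u := circleLift v with hudef
  set U : Set (EuclideanSpace ℝ (Fin m)) := {y | y ≠ 0} with hUdef
  have hUopen : IsOpen U := isOpen_ne
  have hxU : x ∈ U := hx
  have hn : (0:ℝ) < ‖x‖ := norm_pos_iff.2 hx
  -- smoothness of v
  have hvC : ∀ y ∈ U, ContDiffAt ℝ 2 v y := fun y hy =>
    (contDiffAt_norm ℝ hy).rpow_const_of_ne (norm_ne_zero_iff.2 hy)
  have hvU : ContDiffOn ℝ 2 v U := fun y hy => (hvC y hy).contDiffWithinAt
  -- smoothness of u
  have hu : ContDiffOn ℝ 2 u U := by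
    have h1 : ContDiffOn ℝ 2 (fun y => (![Real.cos (v y), Real.sin (v y)] : Fin 2 → ℝ)) U := by
      refine contDiffOn_pi.2 fun i => ?_
      fin_cases i
      · simpa using hvU.cos
      · simpa using hvU.sin
    have h2 : u = ⇑(PiLp.continuousLinearEquiv 2 ℝ (fun _ : Fin 2 => ℝ)).symm ∘
        (fun y => (![Real.cos (v y), Real.sin (v y)] : Fin 2 → ℝ)) := rfl
    rw [h2]
    exact (PiLp.continuousLinearEquiv 2 ℝ (fun _ : Fin 2 => ℝ)).symm.contDiff.comp_contDiffOn h1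
  -- the direction
  set e : EuclideanSpace ℝ (Fin m) := ‖x‖⁻¹ • x with hedef
  have he : ‖e‖ = 1 := by
    rw [hedef, norm_smul, norm_inv, norm_norm, inv_mul_cancel₀ hn.ne']
  set M : Fin 2 → EuclideanSpace ℝ (Fin m) := ![e, e] with hMdef
  set N := ‖iteratedFDeriv ℝ 2 u x‖ with hNdef
  -- coordinate bound
  have hcoord : ∀ (z : EuclideanSpace ℝ (Fin 2)) (i : Fin 2), |z i| ≤ ‖z‖ := by
    intro z i
    rw [EuclideanSpace.norm_eq]
    have h1 : |z i| = Real.sqrt (‖z i‖ ^ 2) := by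
      rw [Real.sqrt_sq_eq_abs, Real.norm_eq_abs, abs_abs]
    rw [h1]
    apply Real.sqrt_le_sqrt
    exact Finset.single_le_sum (fun j _ => sq_nonneg ‖z j‖) (Finset.mem_univ i)
  -- key bound : components of second derivative bounded by N
  have hXle : ∀ (i : Fin 2) (g : EuclideanSpace ℝ (Fin m) → ℝ),
      ((EuclideanSpace.proj i : EuclideanSpace ℝ (Fin 2) →L[ℝ] ℝ) ∘ u) = g →
      |iteratedFDeriv ℝ 2 g x M| ≤ N := by
    intro i g hg
    have hcomp : iteratedFDeriv ℝ 2 ((EuclideanSpace.proj i : EuclideanSpace ℝ (Fin 2) →L[ℝ] ℝ) ∘ u) x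
        = (EuclideanSpace.proj i).compContinuousMultilinearMap (iteratedFDeriv ℝ 2 u x) := by
      have h := (EuclideanSpace.proj (𝕜 := ℝ) i).iteratedFDerivWithin_comp_left (hu x hxU)
        hUopen.uniqueDiffOn hxU (i := 2) (by norm_cast)
      rwa [iteratedFDerivWithin_of_isOpen 2 hUopen hxU,
        iteratedFDerivWithin_of_isOpen 2 hUopen hxU] at h
    rw [← hg, hcomp]
    have h1 : ((EuclideanSpace.proj i).compContinuousMultilinearMap
        (iteratedFDeriv ℝ 2 u x)) M = (iteratedFDeriv ℝ 2 u x M) i := by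
      simp
    rw [h1]
    calc |(iteratedFDeriv ℝ 2 u x M) i| ≤ ‖iteratedFDeriv ℝ 2 u x M‖ := hcoord _ i
      _ ≤ N * ∏ j, ‖M j‖ := (iteratedFDeriv ℝ 2 u x).le_opNorm M
      _ = N := by simp [hMdef, Fin.prod_univ_two, he]
  -- derivative of v at x
  set D : EuclideanSpace ℝ (Fin m) →L[ℝ] ℝ :=
    (fderivInnerCLM ℝ (x, x)).comp
      ((ContinuousLinearMap.id ℝ _).prod (ContinuousLinearMap.id ℝ _)) with hDdef
  have hw : HasFDerivAt (fun y : EuclideanSpace ℝ (Fin m) => (inner ℝ y y : ℝ)) D x :=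
    (hasFDerivAt_id x).inner ℝ (hasFDerivAt_id x)
  have hxx : (inner ℝ x x : ℝ) = ‖x‖ ^ 2 := real_inner_self_eq_norm_sq x
  have hv' : HasFDerivAt v (((-α/2) * (inner ℝ x x : ℝ) ^ (-α/2 - 1)) • D) x := by
    have h2 := hw.rpow_const (p := -α/2) (Or.inl (by rw [hxx]; positivity))
    have h3 : (fun y : EuclideanSpace ℝ (Fin m) => (inner ℝ y y : ℝ) ^ (-α/2)) = v := by
      funext y
      rw [real_inner_self_eq_norm_sq, ← Real.rpow_natCast ‖y‖ 2,
        ← Real.rpow_mul (norm_nonneg y)]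
      simp only [hvdef]
      congr 1
      push_cast
      ring
    rwa [h3] at h2
  have hA : fderiv ℝ v x e = -α * ‖x‖ ^ (-α - 1) := by
    rw [hv'.fderiv]
    simp only [hDdef, ContinuousLinearMap.smul_apply, ContinuousLinearMap.coe_comp',
      Function.comp_apply, ContinuousLinearMap.prod_apply, ContinuousLinearMap.coe_id',
      id_eq, fderivInnerCLM_apply, smul_eq_mul]
    rw [hedef, real_inner_smul_left, real_inner_smul_right, real_inner_self_eq_norm_sq]
    have h5 : ((‖x‖ ^ 2 : ℝ)) ^ (-α/2 - 1) = ‖x‖ ^ (-α - 2) := by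
      rw [← Real.rpow_natCast ‖x‖ 2, ← Real.rpow_mul (norm_nonneg x)]
      congr 1
      push_cast
      ring
    have h6 : ‖x‖⁻¹ * ‖x‖ ^ 2 = ‖x‖ := by field_simp [pow_two]
    have h7 : ‖x‖ ^ (-α - 2) * ‖x‖ = ‖x‖ ^ (-α - 1) := by
      rw [show (-α - 1) = (-α - 2) + 1 by ring, Real.rpow_add hn, Real.rpow_one]
    rw [h5, h6, ← h7]
    ring
  -- second derivative formulas
  have hvx2 : ContDiffAt ℝ 2 v x := hvC x hxU
  have hdiffv : DifferentiableAt ℝ v x := hvx2.differentiableAt (by norm_num)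
  have hvx : HasFDerivAt v (fderiv ℝ v x) x := hdiffv.hasFDerivAt
  have hPdiff : DifferentiableAt ℝ (fderiv ℝ v) x :=
    (hvx2.fderiv_right (m := 1) (by norm_num)).differentiableAt (by norm_num)
  have hcos2 : fderiv ℝ (fderiv ℝ (fun y => Real.cos (v y))) x =
      (-Real.sin (v x)) • fderiv ℝ (fderiv ℝ v) x +
        ((-Real.cos (v x)) • fderiv ℝ v x).smulRight (fderiv ℝ v x) := by
    have hev : fderiv ℝ (fun y => Real.cos (v y)) =ᶠ[nhds x]
        (fun y => (-Real.sin (v y)) • fderiv ℝ v y) := by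
      filter_upwards [hUopen.mem_nhds hxU] with y hy
      have hvy : HasFDerivAt v (fderiv ℝ v y) y :=
        ((hvC y hy).differentiableAt (by norm_num)).hasFDerivAt
      exact hvy.cos.fderiv
    have h1 : HasFDerivAt (fun y => -Real.sin (v y)) ((-Real.cos (v x)) • fderiv ℝ v x) x := by
      have := hvx.sin.neg
      rwa [← neg_smul] at this
    have h2 := h1.smul hPdiff.hasFDerivAt
    rw [hev.fderiv_eq]
    exact h2.fderiv
  have hsin2 : fderiv ℝ (fderiv ℝ (fun y => Real.sin (v y))) x =
      Real.cos (v x) • fderiv ℝ (fderiv ℝ v) x +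
        ((-Real.sin (v x)) • fderiv ℝ v x).smulRight (fderiv ℝ v x) := by
    have hev : fderiv ℝ (fun y => Real.sin (v y)) =ᶠ[nhds x]
        (fun y => Real.cos (v y) • fderiv ℝ v y) := by
      filter_upwards [hUopen.mem_nhds hxU] with y hy
      have hvy : HasFDerivAt v (fderiv ℝ v y) y :=
        ((hvC y hy).differentiableAt (by norm_num)).hasFDerivAt
      exact hvy.sin.fderiv
    have h1 : HasFDerivAt (fun y => Real.cos (v y)) ((-Real.sin (v x)) • fderiv ℝ v x) x :=
      hvx.cos
    have h2 := h1.smul hPdiff.hasFDerivAt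
    rw [hev.fderiv_eq]
    exact h2.fderiv
  have hX1 : iteratedFDeriv ℝ 2 (fun y => Real.cos (v y)) x M =
      -Real.sin (v x) * (fderiv ℝ (fderiv ℝ v) x e e) +
        (-Real.cos (v x) * (-α * ‖x‖ ^ (-α - 1))) * (-α * ‖x‖ ^ (-α - 1)) := by
    rw [iteratedFDeriv_two_apply]
    have hM0 : M 0 = e := rfl
    have hM1 : M 1 = e := rfl
    rw [hM0, hM1, hcos2]
    simp only [ContinuousLinearMap.add_apply, ContinuousLinearMap.coe_smul',
      Pi.smul_apply, ContinuousLinearMap.smulRight_apply, smul_eq_mul, hA]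
  have hX2 : iteratedFDeriv ℝ 2 (fun y => Real.sin (v y)) x M =
      Real.cos (v x) * (fderiv ℝ (fderiv ℝ v) x e e) +
        (-Real.sin (v x) * (-α * ‖x‖ ^ (-α - 1))) * (-α * ‖x‖ ^ (-α - 1)) := by
    rw [iteratedFDeriv_two_apply]
    have hM0 : M 0 = e := rfl
    have hM1 : M 1 = e := rfl
    rw [hM0, hM1, hsin2]
    simp only [ContinuousLinearMap.add_apply, ContinuousLinearMap.coe_smul',
      Pi.smul_apply, ContinuousLinearMap.smulRight_apply, smul_eq_mul, hA]
  have h1 := hXle 0 (fun y => Real.cos (v y)) (by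
    funext y
    simp [hudef, circleLift, PiLp.proj_apply, WithLp.equiv_symm_apply])
  have h2 := hXle 1 (fun y => Real.sin (v y)) (by
    funext y
    simp [hudef, circleLift, PiLp.proj_apply, WithLp.equiv_symm_apply])
  rw [hX1] at h1
  rw [hX2] at h2
  -- final computation
  have hA2 : (-α * ‖x‖ ^ (-α - 1)) ^ 2 = α ^ 2 * ‖x‖ ^ (-(2 * α + 2)) := by
    have hsq : (‖x‖ ^ (-α - 1)) ^ 2 = ‖x‖ ^ (-(2 * α + 2)) := by
      rw [← Real.rpow_natCast (‖x‖ ^ (-α - 1)) 2, ← Real.rpow_mul (norm_nonneg x)]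
      congr 1
      push_cast
      ring
    calc (-α * ‖x‖ ^ (-α - 1)) ^ 2 = α ^ 2 * (‖x‖ ^ (-α - 1)) ^ 2 := by ring
      _ = _ := by rw [hsq]
  rw [← hA2]
  by_contra hcon
  push_neg at hcon
  have hNpos : 0 ≤ N := norm_nonneg _
  have hsq2 : Real.sqrt 2 ^ 2 = 2 := Real.sq_sqrt (by norm_num)
  have hpy : Real.sin (v x) ^ 2 + Real.cos (v x) ^ 2 = 1 := Real.sin_sq_add_cos_sq (v x)
  set A : ℝ := -α * ‖x‖ ^ (-α - 1) with hAdef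
  set B : ℝ := fderiv ℝ (fderiv ℝ v) x e e with hBdef
  set sx := Real.sin (v x) with hsxdef
  set cx := Real.cos (v x) with hcxdef
  clear_value A B sx cx N
  clear hcos2 hsin2 hXle hcoord hu hvU hvC hw hv' hxx hvx hvx2 hdiffv hPdiff hX1 hX2 hA hA2
  have hsum : (-sx * B + (-cx * A) * A) ^ 2 + (cx * B + (-sx * A) * A) ^ 2
      = B ^ 2 + A ^ 2 * A ^ 2 := by
    linear_combination (B ^ 2 + A ^ 2 * A ^ 2) * hpy
  have hb1 : (-sx * B + (-cx * A) * A) ^ 2 ≤ N ^ 2 := by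
    nlinarith [h1, sq_abs (-sx * B + (-cx * A) * A), abs_nonneg (-sx * B + (-cx * A) * A)]
  have hb2 : (cx * B + (-sx * A) * A) ^ 2 ≤ N ^ 2 := by
    nlinarith [h2, sq_abs (cx * B + (-sx * A) * A), abs_nonneg (cx * B + (-sx * A) * A)]
  nlinarith [hsum, hb1, hb2, hcon, hsq2, Real.sqrt_nonneg 2, sq_nonneg B, hNpos, sq_nonneg A,
    mul_nonneg (Real.sqrt_nonneg 2) hNpos]


/-- For `u(x) = (cos(‖x‖^{-α}), sin(‖x‖^{-α}))` on `ℝᵐ` with `α > (m-2)/2`, the norm of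
the second iterated Fréchet derivative of `u` is not Lebesgue-integrable on the
unit ball. -/
theorem circleLift_rpow_not_integrable_second (m : ℕ) (hm : 1 ≤ m) (α : ℝ) (hα : 0 < α)
    (hα' : (m - 2 : ℝ) / 2 < α) :
    ¬ IntegrableOn
        (fun x : EuclideanSpace ℝ (Fin m) =>
          ‖iteratedFDeriv ℝ 2 (circleLift fun y : EuclideanSpace ℝ (Fin m) => ‖y‖ ^ (-α)) x‖)
        (Metric.ball 0 1) volume := by
  have hs : (m : ℝ) < 2 * α + 2 := by linarith
  have hsqrt : (0 : ℝ) < Real.sqrt 2 := Real.sqrt_pos.2 (by norm_num)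
  have hbound : ∀ x : EuclideanSpace ℝ (Fin m), x ≠ 0 →
      α ^ 2 / Real.sqrt 2 * ‖x‖ ^ (-(2 * α + 2)) ≤
        ‖iteratedFDeriv ℝ 2 (circleLift fun y : EuclideanSpace ℝ (Fin m) => ‖y‖ ^ (-α)) x‖ := by
    intro x hx
    have h := aux_lower m α hα x hx
    rw [div_mul_eq_mul_div, div_le_iff₀ hsqrt]
    linarith [h]
  exact aux_not_integrable m hm (2 * α + 2) hs (div_pos (by positivity) hsqrt) _
    (fun x => norm_nonneg _) hbound
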